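/- Let a, b, c be complex numbers, let α = (α_i)_{i≥0} and β = (β_j)_{j≥0} be the sequences with α_i = 2^{i-1}(i·a + 2c) and β_j = 2^{j-1}(j·b + 2c). Then for every integer n ≥ 2, det(P_{α,β}(n)) = (-1)^{n+1}·(a+b)^{n-2}·[c(a+b) + (n-1)ab]. -/

import Mathlib

open Matrix

/-- Entry `P_{i,j}` of the generalized Pascal triangle associated to sequences `α`, `β`:
`P_{i,0} = α i`, `P_{0,j} = β j`, and `P_{i,j} = P_{i-1,j} + P_{i,j-1}` for `i, j ≥ 1`. -/
def pascalEntry {R : Type*} [CommRing R] (α β : ℕ → R) : ℕ → ℕ → R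
  | i, 0 => α i
  | 0, j + 1 => β (j + 1)
  | i + 1, j + 1 => pascalEntry α β i (j + 1) + pascalEntry α β (i + 1) j

/-- The generalized Pascal triangle `P_{α,β}(n)`. -/
def genPascal {R : Type*} [CommRing R] (α β : ℕ → R) (n : ℕ) :
    Matrix (Fin n) (Fin n) R :=
  Matrix.of fun i j => pascalEntry α β (i : ℕ) (j : ℕ)

/-- The Töplitz matrix `T_{α,β}(n)`: `t_{i,j} = α_{i-j}` if `i ≥ j`, else `β_{j-i}`. -/
def toeplitz {R : Type*} [CommRing R] (α β : ℕ → R) (n : ℕ) :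
    Matrix (Fin n) (Fin n) R :=
  Matrix.of fun i j => if (j : ℕ) ≤ (i : ℕ) then α ((i : ℕ) - (j : ℕ)) else β ((j : ℕ) - (i : ℕ))

/-- The unipotent lower triangular matrix `L(n)` with `L_{i,j} = C(i,j)` for `i ≥ j`. -/
def lowerL (R : Type*) [CommRing R] (n : ℕ) : Matrix (Fin n) (Fin n) R :=
  Matrix.of fun i j => if (j : ℕ) ≤ (i : ℕ) then ((i : ℕ).choose (j : ℕ) : R) else 0

/-- The binomial inverse transform `α̂_i = ∑_{k=0}^{i} (-1)^{i+k} C(i,k) α_k`. -/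
def hatSeq {R : Type*} [CommRing R] (α : ℕ → R) (i : ℕ) : R :=
  ∑ k ∈ Finset.range (i + 1), (-1 : R) ^ (i + k) * (i.choose k : R) * α k

/-- The binomial transform `α̌_i = ∑_{k=0}^{i} C(i,k) α_k`. -/
def checkSeq {R : Type*} [CommRing R] (α : ℕ → R) (i : ℕ) : R :=
  ∑ k ∈ Finset.range (i + 1), (i.choose k : R) * α k

namespace PascalAux12

open Finset

/-! ### Binomial sum identities -/

lemma sum_choose_C (i : ℕ) : ∑ k ∈ range (i+1), (i.choose k : ℂ) = 2 ^ i := by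
  have h := congrArg (Nat.cast : ℕ → ℂ) (Nat.sum_range_choose i)
  push_cast at h
  exact h

lemma sum_choose_mul_nat (i : ℕ) : ∑ k ∈ range (i+1), i.choose k * k * 2 = i * 2 ^ i := by
  cases i with
  | zero => simp
  | succ m =>
    rw [Finset.sum_range_succ']
    simp only [Nat.mul_zero, Nat.zero_mul, Nat.add_zero, Nat.choose_zero_right]
    have h : ∀ k, (m+1).choose (k+1) * (k+1) = (m+1) * m.choose k :=
      fun k => (Nat.add_one_mul_choose_eq m k).symm
    calc (∑ k ∈ range (m+1), (m+1).choose (k+1) * (k+1) * 2)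
        = ∑ k ∈ range (m+1), (m+1) * m.choose k * 2 := by
          refine Finset.sum_congr rfl fun k _ => ?_
          rw [h k]
      _ = (m+1) * (∑ k ∈ range (m+1), m.choose k) * 2 := by rw [Finset.mul_sum, Finset.sum_mul]
      _ = (m+1) * 2 ^ m * 2 := by rw [Nat.sum_range_choose]
      _ = (m+1) * 2 ^ (m+1) := by ring

lemma sum_choose_mul_C (i : ℕ) : (∑ k ∈ range (i+1), (i.choose k : ℂ) * k) * 2 = i * 2 ^ i := by
  have h2 := congrArg (Nat.cast : ℕ → ℂ) (sum_choose_mul_nat i)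
  push_cast at h2
  calc (∑ k ∈ range (i+1), (i.choose k : ℂ) * k) * 2
      = ∑ k ∈ range (i+1), (i.choose k : ℂ) * k * 2 := by rw [Finset.sum_mul]
    _ = (i : ℂ) * 2 ^ i := h2

lemma sum_choose_lin (x c : ℂ) (i : ℕ) :
    ∑ k ∈ range (i+1), (i.choose k : ℂ) * ((k : ℂ) * x + c) = 2 ^ i * ((i : ℂ) * x + 2 * c) / 2 := by
  have h1 := sum_choose_C i
  have h2 := sum_choose_mul_C i
  have h : ∑ k ∈ range (i+1), (i.choose k : ℂ) * ((k : ℂ) * x + c)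
      = (∑ k ∈ range (i+1), (i.choose k : ℂ) * k) * x + (∑ k ∈ range (i+1), (i.choose k : ℂ)) * c := by
    rw [Finset.sum_mul, Finset.sum_mul, ← Finset.sum_add_distrib]
    exact Finset.sum_congr rfl fun k _ => by ring
  rw [h, h1]
  field_simp
  linear_combination x * h2

lemma binom_succ_sum (g : ℕ → ℂ) (i : ℕ) :
    ∑ k ∈ range (i+2), ((i+1).choose k : ℂ) * g k
      = ∑ k ∈ range (i+1), (i.choose k : ℂ) * g k
        + ∑ k ∈ range (i+1), (i.choose k : ℂ) * g (k+1) := by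
  rw [Finset.sum_range_succ' (fun k => ((i+1).choose k : ℂ) * g k) (i+1)]
  have h2 : ∑ k ∈ range (i+1), ((i+1).choose (k+1) : ℂ) * g (k+1)
      = ∑ k ∈ range (i+1), (i.choose k : ℂ) * g (k+1)
        + ∑ k ∈ range (i+1), (i.choose (k+1) : ℂ) * g (k+1) := by
    rw [← Finset.sum_add_distrib]
    refine Finset.sum_congr rfl fun k _ => ?_
    rw [Nat.choose_succ_succ]; push_cast; ring
  have h3 : (∑ k ∈ range (i+1), (i.choose (k+1) : ℂ) * g (k+1)) + (1 : ℂ) * g 0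
      = ∑ k ∈ range (i+1), (i.choose k : ℂ) * g k := by
    have ha := Finset.sum_range_succ' (fun k => (i.choose k : ℂ) * g k) (i+1)
    have hb := Finset.sum_range_succ (fun k => (i.choose k : ℂ) * g k) (i+1)
    simp only [Nat.choose_succ_self, Nat.cast_zero, zero_mul, add_zero,
      Nat.choose_zero_right, Nat.cast_one] at ha hb
    rw [hb] at ha
    exact ha.symm
  simp only [Nat.choose_zero_right, Nat.cast_one] at *
  rw [h2]
  linear_combination h3

/-! ### The Toeplitz kernel and its double binomial transform -/

def tt (x y c : ℂ) (k l : ℕ) : ℂ :=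
  if l ≤ k then ((k - l : ℕ) : ℂ) * x + c else ((l - k : ℕ) : ℂ) * y + c

lemma tt_shift (x y c : ℂ) (k l : ℕ) : tt x y c (k+1) (l+1) = tt x y c k l := by
  simp [tt, Nat.succ_sub_succ, Nat.add_le_add_iff_right]

lemma tt_k0 (x y c : ℂ) (k : ℕ) : tt x y c k 0 = (k : ℂ) * x + c := by
  simp [tt]

lemma tt_0l (x y c : ℂ) (l : ℕ) : tt x y c 0 l = (l : ℂ) * y + c := by
  cases l with
  | zero => simp [tt]
  | succ m => simp [tt]

noncomputable def FF (x y c : ℂ) (i j : ℕ) : ℂ :=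
  ∑ k ∈ range (i+1), (i.choose k : ℂ) * ∑ l ∈ range (j+1), (j.choose l : ℂ) * tt x y c k l

lemma FF_succ_succ (x y c : ℂ) (i j : ℕ) :
    FF x y c (i+1) (j+1) = FF x y c i (j+1) + FF x y c (i+1) j := by
  unfold FF
  rw [show i+1+1 = i+2 from rfl,
    binom_succ_sum (fun k => ∑ l ∈ range (j+1+1), ((j+1).choose l : ℂ) * tt x y c k l) i,
    binom_succ_sum (fun k => ∑ l ∈ range (j+1), (j.choose l : ℂ) * tt x y c k l) i]
  have h : ∀ k : ℕ, (∑ l ∈ range (j+1+1), ((j+1).choose l : ℂ) * tt x y c (k+1) l)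
      = (∑ l ∈ range (j+1), (j.choose l : ℂ) * tt x y c (k+1) l)
        + ∑ l ∈ range (j+1), (j.choose l : ℂ) * tt x y c k l := by
    intro k
    rw [show j+1+1 = j+2 from rfl, binom_succ_sum (fun l => tt x y c (k+1) l) j]
    congr 1
    exact Finset.sum_congr rfl fun l _ => by rw [tt_shift]
  simp_rw [h, mul_add, Finset.sum_add_distrib]
  ring

lemma FF_i0 (x y c : ℂ) (i : ℕ) : FF x y c i 0 = 2 ^ i * ((i : ℂ) * x + 2 * c) / 2 := by
  unfold FF
  simp only [zero_add, Finset.sum_range_one, Nat.choose_self, Nat.cast_one, one_mul, tt_k0]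
  exact sum_choose_lin x c i

lemma FF_0j (x y c : ℂ) (j : ℕ) : FF x y c 0 j = 2 ^ j * ((j : ℂ) * y + 2 * c) / 2 := by
  unfold FF
  simp only [zero_add, Finset.sum_range_one, Nat.choose_self, Nat.cast_one, one_mul, tt_0l]
  exact sum_choose_lin y c j

lemma pascal_eq_FF (x y c : ℂ) (i j : ℕ) :
    pascalEntry (fun i => (2 : ℂ) ^ i * ((i : ℂ) * x + 2 * c) / 2)
      (fun j => (2 : ℂ) ^ j * ((j : ℂ) * y + 2 * c) / 2) i j = FF x y c i j := by
  induction i generalizing j with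
  | zero =>
    cases j with
    | zero => rw [pascalEntry, FF_i0]
    | succ m => rw [pascalEntry, FF_0j]
  | succ i ih =>
    induction j with
    | zero => rw [pascalEntry, FF_i0]
    | succ j ihj => rw [pascalEntry, FF_succ_succ, ih (j+1), ihj]

/-! ### Truncated `Fin` sums -/

lemma fin_sum_trunc {n : ℕ} (i : Fin n) (f : ℕ → ℂ) (hf : ∀ k, (i : ℕ) < k → f k = 0) :
    ∑ k : Fin n, f (k : ℕ) = ∑ k ∈ range ((i : ℕ) + 1), f k := by
  rw [Fin.sum_univ_eq_sum_range]
  exact (Finset.sum_subset (Finset.range_subset_range.mpr i.isLt)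
    (fun k _ hk => hf k (by simpa using hk))).symm

lemma tri_sum {n : ℕ} (i : Fin n) (w f : ℕ → ℂ) :
    ∑ k : Fin n, (if (k : ℕ) ≤ (i : ℕ) then w (k : ℕ) else 0) * f (k : ℕ)
      = ∑ k ∈ range ((i : ℕ) + 1), w k * f k := by
  rw [fin_sum_trunc i (fun k => (if k ≤ (i : ℕ) then w k else 0) * f k)
    (fun k hk => by have h : ¬ k ≤ (i : ℕ) := by omega
                    simp only [h, if_false, zero_mul])]
  exact Finset.sum_congr rfl fun k hk =>
    by rw [if_pos (Nat.lt_succ_iff.mp (Finset.mem_range.mp hk))]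

/-! ### The factorization `P = L T Lᵀ` -/

noncomputable def Tm (x y c : ℂ) (n : ℕ) : Matrix (Fin n) (Fin n) ℂ :=
  Matrix.of fun i j => tt x y c (i : ℕ) (j : ℕ)

lemma LTL_apply (x y c : ℂ) (n : ℕ) (i j : Fin n) :
    (lowerL ℂ n * Tm x y c n * (lowerL ℂ n)ᵀ) i j = FF x y c (i : ℕ) (j : ℕ) := by
  have inner : ∀ l : Fin n,
      (lowerL ℂ n * Tm x y c n) i l
        = ∑ k ∈ range ((i:ℕ)+1), ((i:ℕ).choose k : ℂ) * tt x y c k (l:ℕ) := by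
    intro l
    rw [mul_apply]
    calc ∑ k : Fin n, lowerL ℂ n i k * Tm x y c n k l
        = ∑ k : Fin n, (if (k:ℕ) ≤ (i:ℕ) then ((i:ℕ).choose (k:ℕ) : ℂ) else 0) * tt x y c (k:ℕ) (l:ℕ) :=
          Finset.sum_congr rfl fun k _ => rfl
      _ = ∑ k ∈ range ((i:ℕ)+1), ((i:ℕ).choose k : ℂ) * tt x y c k (l:ℕ) :=
          tri_sum i (fun k => ((i:ℕ).choose k : ℂ)) (fun k => tt x y c k (l:ℕ))
  rw [mul_apply]
  calc ∑ l : Fin n, (lowerL ℂ n * Tm x y c n) i l * (lowerL ℂ n)ᵀ l j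
      = ∑ l : Fin n, (if (l:ℕ) ≤ (j:ℕ) then ((j:ℕ).choose (l:ℕ) : ℂ) else 0)
          * ∑ k ∈ range ((i:ℕ)+1), ((i:ℕ).choose k : ℂ) * tt x y c k (l:ℕ) := by
        refine Finset.sum_congr rfl fun l _ => ?_
        rw [inner l, transpose_apply, mul_comm]
        rfl
    _ = ∑ l ∈ range ((j:ℕ)+1), ((j:ℕ).choose l : ℂ)
          * ∑ k ∈ range ((i:ℕ)+1), ((i:ℕ).choose k : ℂ) * tt x y c k l :=
        tri_sum j (fun l => ((j:ℕ).choose l : ℂ))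
          (fun l => ∑ k ∈ range ((i:ℕ)+1), ((i:ℕ).choose k : ℂ) * tt x y c k l)
    _ = FF x y c (i : ℕ) (j : ℕ) := by
        unfold FF
        simp_rw [Finset.mul_sum]
        rw [Finset.sum_comm]
        exact Finset.sum_congr rfl fun k _ => Finset.sum_congr rfl fun l _ => by ring

/-! ### The arrowhead kernel and the factorization `T = S E Sᵀ` -/

def ee (x y c : ℂ) (k l : ℕ) : ℂ :=
  if k = 0 ∧ l = 0 then c else if k = 0 then y else if l = 0 then x
  else if k = l then -(x + y) else 0

lemma ee_row0 (x y c : ℂ) (j : ℕ) :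
    ∑ l ∈ range (j+1), ee x y c 0 l = (j : ℂ) * y + c := by
  induction j with
  | zero => simp [ee]
  | succ j ih =>
    rw [Finset.sum_range_succ, ih]
    simp only [ee, Nat.succ_ne_zero, and_false, if_false, if_true]
    push_cast; ring

lemma ee_row (x y c : ℂ) (i j : ℕ) :
    ∑ l ∈ range (j+1), ee x y c (i+1) l = x + (if i+1 ≤ j then -(x + y) else 0) := by
  induction j with
  | zero =>
    rw [if_neg (by omega)]
    simp [ee]
  | succ j ih =>
    rw [Finset.sum_range_succ, ih]
    by_cases h : i + 1 ≤ j
    · rw [if_pos h, if_pos (by omega)]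
      have h0 : ee x y c (i+1) (j+1) = 0 := by
        simp only [ee, Nat.succ_ne_zero, and_false, if_false]
        rw [if_neg (by omega)]
      rw [h0]; ring
    · rw [if_neg h]
      by_cases h2 : i = j
      · subst h2
        rw [if_pos le_rfl]
        have h0 : ee x y c (i+1) (i+1) = -(x+y) := by
          simp [ee]
        rw [h0]; ring
      · rw [if_neg (by omega)]
        have h0 : ee x y c (i+1) (j+1) = 0 := by
          simp only [ee, Nat.succ_ne_zero, and_false, if_false]
          rw [if_neg (by omega)]
        rw [h0]; ring

lemma ee_sum (x y c : ℂ) (i j : ℕ) :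
    ∑ k ∈ range (i+1), ∑ l ∈ range (j+1), ee x y c k l = tt x y c i j := by
  induction i with
  | zero => rw [Finset.sum_range_one, ee_row0, tt_0l]
  | succ i ih =>
    rw [Finset.sum_range_succ, ih, ee_row]
    by_cases h : j ≤ i
    · rw [if_neg (by omega)]
      have h1 : j ≤ i + 1 := by omega
      have h2 : i + 1 - j = (i - j) + 1 := by omega
      simp only [tt, if_pos h, if_pos h1, h2]
      push_cast; ring
    · rw [if_pos (by omega)]
      have h1 : ¬ (j ≤ i) := h
      by_cases h3 : j ≤ i + 1
      · have hj : j = i + 1 := by omega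
        subst hj
        simp only [tt, if_pos le_rfl, if_neg h1, Nat.sub_self]
        have h4 : i + 1 - i = 1 := by omega
        rw [h4]
        push_cast; ring
      · simp only [tt, if_neg h1, if_neg h3]
        have h4 : j - (i+1) = (j - i) - 1 := by omega
        have h5 : 1 ≤ j - i := by omega
        rw [h4, Nat.cast_sub h5]
        push_cast; ring

def Em (x y c : ℂ) (n : ℕ) : Matrix (Fin n) (Fin n) ℂ :=
  Matrix.of fun i j => ee x y c (i : ℕ) (j : ℕ)

def Sm (n : ℕ) : Matrix (Fin n) (Fin n) ℂ :=
  Matrix.of fun i j => if (j : ℕ) ≤ (i : ℕ) then 1 else 0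

lemma SES (x y c : ℂ) (n : ℕ) : Sm n * Em x y c n * (Sm n)ᵀ = Tm x y c n := by
  ext i j
  have inner : ∀ l : Fin n,
      (Sm n * Em x y c n) i l = ∑ k ∈ range ((i:ℕ)+1), ee x y c k (l:ℕ) := by
    intro l
    rw [mul_apply]
    calc ∑ k : Fin n, Sm n i k * Em x y c n k l
        = ∑ k : Fin n, (if (k:ℕ) ≤ (i:ℕ) then (fun _ : ℕ => (1:ℂ)) (k:ℕ) else 0) * ee x y c (k:ℕ) (l:ℕ) :=
          Finset.sum_congr rfl fun k _ => rfl
      _ = ∑ k ∈ range ((i:ℕ)+1), (fun _ : ℕ => (1:ℂ)) k * ee x y c k (l:ℕ) :=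
          tri_sum i (fun _ => (1:ℂ)) (fun k => ee x y c k (l:ℕ))
      _ = ∑ k ∈ range ((i:ℕ)+1), ee x y c k (l:ℕ) :=
          Finset.sum_congr rfl fun k _ => one_mul _
  rw [mul_apply]
  calc ∑ l : Fin n, (Sm n * Em x y c n) i l * (Sm n)ᵀ l j
      = ∑ l : Fin n, (if (l:ℕ) ≤ (j:ℕ) then (fun _ : ℕ => (1:ℂ)) (l:ℕ) else 0)
          * (fun l' : ℕ => ∑ k ∈ range ((i:ℕ)+1), ee x y c k l') (l:ℕ) := by
        refine Finset.sum_congr rfl fun l _ => ?_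
        rw [inner l, transpose_apply, mul_comm]
        rfl
    _ = ∑ l ∈ range ((j:ℕ)+1), (fun _ : ℕ => (1:ℂ)) l * ∑ k ∈ range ((i:ℕ)+1), ee x y c k l :=
        tri_sum j (fun _ => (1:ℂ)) (fun l' => ∑ k ∈ range ((i:ℕ)+1), ee x y c k l')
    _ = tt x y c (i:ℕ) (j:ℕ) := by
        simp only [one_mul]
        rw [Finset.sum_comm]
        exact ee_sum x y c (i:ℕ) (j:ℕ)

/-! ### Determinants of the triangular factors -/

lemma det_Sm (n : ℕ) : (Sm n).det = 1 := by
  rw [Matrix.det_of_lowerTriangular (Sm n)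
    (by intro i j hij
        simp only [Sm, Matrix.of_apply]
        rw [if_neg (by exact_mod_cast not_le.mpr hij)])]
  simp [Sm]

lemma det_lowerL (n : ℕ) : (lowerL ℂ n).det = 1 := by
  rw [Matrix.det_of_lowerTriangular (lowerL ℂ n)
    (by intro i j hij
        simp only [lowerL, Matrix.of_apply]
        rw [if_neg (by exact_mod_cast not_le.mpr hij)])]
  simp [lowerL]

/-! ### Determinant of the arrowhead matrix -/

def Fm (x y : ℂ) (n : ℕ) : Matrix (Fin n) (Fin n) ℂ :=
  Matrix.of fun i j => if (i : ℕ) = 0 then y else if (i : ℕ) = (j : ℕ) + 1 then -(x + y) else 0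

lemma det_Fm (x y : ℂ) (m : ℕ) : (Fm x y (m+1)).det = y * (x + y) ^ m := by
  rw [Matrix.det_succ_column (Fm x y (m+1)) (Fin.last m)]
  rw [Finset.sum_eq_single (0 : Fin (m+1))]
  · have h0 : Fm x y (m+1) 0 (Fin.last m) = y := by simp [Fm]
    rw [h0]
    have hsub : (Fm x y (m+1)).submatrix (Fin.succAbove 0) (Fin.succAbove (Fin.last m))
        = Matrix.of (fun i j : Fin m => if (i : ℕ) = (j : ℕ) then -(x + y) else 0) := by
      ext i j
      simp only [Matrix.submatrix_apply, Fin.succAbove_zero, Fin.succAbove_last, Fm,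
        Matrix.of_apply, Fin.val_succ, Fin.coe_castSucc]
      rw [if_neg (Nat.succ_ne_zero _)]
      by_cases hij : (i:ℕ) = (j:ℕ)
      · rw [if_pos (by omega), if_pos hij]
      · rw [if_neg (by omega), if_neg hij]
    rw [hsub]
    have hdiag2 : Matrix.of (fun i j : Fin m => if (i : ℕ) = (j : ℕ) then -(x + y) else 0)
        = Matrix.diagonal (fun _ : Fin m => -(x + y)) := by
      ext i j
      by_cases h : i = j
      · subst h; simp
      · rw [Matrix.of_apply, if_neg (fun hc => h (Fin.ext hc)), Matrix.diagonal_apply_ne _ h]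
    rw [hdiag2, Matrix.det_diagonal]
    simp only [Fin.val_zero, Fin.val_last, zero_add, Finset.prod_const, Finset.card_univ,
      Fintype.card_fin]
    have key : ((-1:ℂ))^m * (-(x+y))^m = (x+y)^m := by
      rw [← mul_pow]; congr 1; ring
    calc (-1:ℂ)^m * y * (-(x+y))^m = y * ((-1:ℂ)^m * (-(x+y))^m) := by ring
      _ = y * (x+y)^m := by rw [key]
  · intro i _ hi
    have h0 : Fm x y (m+1) i (Fin.last m) = 0 := by
      have h1 : (i : ℕ) ≠ 0 := fun hc => hi (Fin.ext hc)
      have h2 : ¬ ((i : ℕ) = m + 1) := by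
        have := i.isLt; omega
      simp [Fm, h1, h2, hi]
    rw [h0]; ring
  · intro h; exact absurd (Finset.mem_univ _) h

lemma det_Em (x y c : ℂ) : ∀ m : ℕ, (Em x y c (m+2)).det
    = (-1:ℂ)^(m+3) * (x+y)^m * (c*(x+y) + ((m:ℂ)+1)*x*y) := by
  intro m
  induction m with
  | zero =>
    rw [show (0+2 : ℕ) = 2 from rfl, Matrix.det_fin_two]
    simp only [Em, Matrix.of_apply, Fin.val_zero, Fin.val_one, ee]
    norm_num
    ring
  | succ m ih =>
    rw [show m+1+2 = (m+2)+1 from rfl,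
      Matrix.det_succ_row (Em x y c ((m+2)+1)) (Fin.last (m+2))]
    have hvan : ∀ j ∈ (Finset.univ : Finset (Fin (m+3))),
        j ∉ ({0, Fin.last (m+2)} : Finset (Fin (m+3))) →
        (-1:ℂ)^((Fin.last (m+2) : ℕ) + (j : ℕ)) * Em x y c ((m+2)+1) (Fin.last (m+2)) j *
          ((Em x y c ((m+2)+1)).submatrix (Fin.last (m+2)).succAbove j.succAbove).det = 0 := by
      intro j _ hj
      simp only [Finset.mem_insert, Finset.mem_singleton, not_or] at hj
      have h1 : (j : ℕ) ≠ 0 := fun hc => hj.1 (Fin.ext hc)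
      have h2 : (m+2 : ℕ) ≠ (j : ℕ) := by
        intro hc; exact hj.2 (Fin.ext (by simp [← hc]))
      have h0 : Em x y c ((m+2)+1) (Fin.last (m+2)) j = 0 := by
        simp only [Em, Matrix.of_apply, Fin.val_last, ee]
        rw [if_neg (by omega), if_neg (by omega), if_neg h1, if_neg h2]
      rw [h0]; ring
    rw [← Finset.sum_subset (Finset.subset_univ ({0, Fin.last (m+2)} : Finset (Fin (m+3)))) hvan]
    rw [Finset.sum_pair (by
      intro hc
      have := congrArg Fin.val hc
      simp at this)]
    have e0 : Em x y c ((m+2)+1) (Fin.last (m+2)) 0 = x := by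
      simp only [Em, Matrix.of_apply, Fin.val_last, Fin.val_zero, ee]
      rw [if_neg (by omega), if_neg (by omega)]
      simp
    have el : Em x y c ((m+2)+1) (Fin.last (m+2)) (Fin.last (m+2)) = -(x+y) := by
      simp only [Em, Matrix.of_apply, Fin.val_last, ee]
      rw [if_neg (by omega), if_neg (by omega), if_neg (by omega)]
      simp
    have s0 : (Em x y c ((m+2)+1)).submatrix (Fin.last (m+2)).succAbove (0 : Fin (m+3)).succAbove
        = Fm x y (m+2) := by
      ext i j
      simp only [Matrix.submatrix_apply, Fin.succAbove_last, Fin.succAbove_zero, Em, Fm,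
        Matrix.of_apply, Fin.coe_castSucc, Fin.val_succ, ee]
      rw [if_neg (by omega)]
      by_cases h : (i : ℕ) = 0
      · rw [if_pos h, if_pos h]
      · rw [if_neg h, if_neg h, if_neg (by omega)]
    have sl : (Em x y c ((m+2)+1)).submatrix (Fin.last (m+2)).succAbove
        (Fin.last (m+2)).succAbove = Em x y c (m+2) := by
      ext i j
      simp only [Matrix.submatrix_apply, Fin.succAbove_last, Em, Matrix.of_apply,
        Fin.coe_castSucc]
    rw [e0, el, s0, sl, det_Fm, ih]
    simp only [Fin.val_last, Fin.val_zero, add_zero]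
    have p1 : ((-1:ℂ))^(m+2) = (-1:ℂ)^m := by rw [pow_add]; norm_num
    have p2 : ((-1:ℂ))^(m+2+(m+2)) = 1 := by rw [← two_mul, pow_mul]; norm_num
    have p3 : ((-1:ℂ))^(m+3) = -(-1:ℂ)^m := by rw [pow_add]; norm_num
    have p4 : ((-1:ℂ))^(m+1+3) = (-1:ℂ)^m := by rw [show m+1+3 = m+4 from rfl, pow_add]; norm_num
    rw [p1, p2, p3, p4]
    push_cast
    ring

end PascalAux12

/-- for `α_i = 2^{i-1}(i a + 2c)`, `β_j = 2^{j-1}(j b + 2c)`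
(so that `α_0 = β_0 = c`), and `n ≥ 2`,
`det(P_{α,β}(n)) = (-1)^{n+1} (a+b)^{n-2} [c(a+b) + (n-1)ab]`. -/
theorem det_genPascal_two_pow_arith (a b c : ℂ) (n : ℕ) (hn : 2 ≤ n) :
    (genPascal (fun i => (2 : ℂ) ^ i * ((i : ℂ) * a + 2 * c) / 2)
        (fun j => (2 : ℂ) ^ j * ((j : ℂ) * b + 2 * c) / 2) n).det =
      (-1 : ℂ) ^ (n + 1) * (a + b) ^ (n - 2) * (c * (a + b) + ((n : ℂ) - 1) * a * b) := by
  obtain ⟨m, rfl⟩ : ∃ m, n = m + 2 := ⟨n - 2, by omega⟩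
  open PascalAux12 in
  have h1 : genPascal (fun i => (2 : ℂ) ^ i * ((i : ℂ) * a + 2 * c) / 2)
      (fun j => (2 : ℂ) ^ j * ((j : ℂ) * b + 2 * c) / 2) (m+2)
      = lowerL ℂ (m+2) * Tm a b c (m+2) * (lowerL ℂ (m+2))ᵀ := by
    ext i j
    calc (genPascal (fun i => (2 : ℂ) ^ i * ((i : ℂ) * a + 2 * c) / 2)
        (fun j => (2 : ℂ) ^ j * ((j : ℂ) * b + 2 * c) / 2) (m+2)) i j
        = pascalEntry (fun i => (2 : ℂ) ^ i * ((i : ℂ) * a + 2 * c) / 2)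
            (fun j => (2 : ℂ) ^ j * ((j : ℂ) * b + 2 * c) / 2) (i : ℕ) (j : ℕ) := rfl
      _ = FF a b c (i : ℕ) (j : ℕ) := pascal_eq_FF a b c (i : ℕ) (j : ℕ)
      _ = (lowerL ℂ (m+2) * Tm a b c (m+2) * (lowerL ℂ (m+2))ᵀ) i j :=
          (LTL_apply a b c (m+2) i j).symm
  rw [h1, Matrix.det_mul, Matrix.det_mul, Matrix.det_transpose,
    PascalAux12.det_lowerL, one_mul, mul_one]
  rw [← PascalAux12.SES a b c (m+2), Matrix.det_mul, Matrix.det_mul, Matrix.det_transpose,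
    PascalAux12.det_Sm, one_mul, mul_one]
  rw [PascalAux12.det_Em a b c m]
  have hexp : m + 2 - 2 = m := by omega
  have hpow : ((-1:ℂ))^(m+2+1) = (-1:ℂ)^(m+3) := by norm_num
  rw [hexp, hpow]
  push_cast
  ring
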